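/- Proposition (Inefficient backloading from the first-order conditions, T = 3). Let N ≥ 2, let 0 < δ^(1) < ⋯ < δ^(N), let p, q be probability vectors on {1,…,N} with p_n > 0 and q_n > 0 for all n and Σ_{n=1}^{m'} p_n ≥ Σ_{n=1}^{m'} q_n for every m', and write Q̄_n := Σ_{m=n}^N q_m. Let R > 0, δ₁ > 0, λ > 0, let φ' : ℝ → ℝ be strictly increasing (the derivative of a strictly convex payment function φ), and let w, z : {1,…,N} → ℝ with w strictly decreasing. Suppose the first-order conditions hold: δ₁ = (λ/R)·Σ_{n=1}^N p_n φ'(w_n), and for every n ∈ {2,…,N}: 0 = (δ^(n) − δ^(n−1))·(δ₁·Q̄_n − (λ/R)·Σ_{m=n}^N p_m φ'(w_m)) + (λ p_n δ^(n)/R)·φ'(w_n) − (λ p_n/R²)·φ'(z_n). Then for every n ∈ {2,…,N}: δ^(n)·R·φ'(w_n) < φ'(z_n). -/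

import Mathlib

/-- Inefficient backloading from the first-order conditions (T = 3).
`w n` is the date-2 utility and `z n` the date-3 utility when the date-2 discount factor
is `δ n`; `φ'` is the (strictly increasing) derivative of the strictly convex payment
function; `lam` the multiplier on the firm's break-even constraint; `p` the firm's true
probabilities and `q` the agent's probabilities, with the agent weakly more optimistic
(first-order stochastic dominance).  Given the stationarity (first-order) conditions of
an interior separating solution (`w` strictly decreasing), consumption is inefficiently
backloaded: `δ n · R · φ'(w n) < φ'(z n)` for every `n ≥ 2`. -/
theorem stmt12
    (N : ℕ) (hN : 2 ≤ N)
    (δ : ℕ → ℝ) (hδ1 : 0 < δ 1)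
    (hδmono : ∀ n m, 1 ≤ n → n < m → m ≤ N → δ n < δ m)
    (p q : ℕ → ℝ)
    (hp : ∀ n, 1 ≤ n → n ≤ N → 0 < p n)
    (hq : ∀ n, 1 ≤ n → n ≤ N → 0 < q n)
    (hp1 : ∑ n ∈ Finset.Icc 1 N, p n = 1)
    (hq1 : ∑ n ∈ Finset.Icc 1 N, q n = 1)
    (hFOSD : ∀ m', 1 ≤ m' → m' ≤ N →
      ∑ n ∈ Finset.Icc 1 m', q n ≤ ∑ n ∈ Finset.Icc 1 m', p n)
    (R δ1 lam : ℝ) (hR : 0 < R) (hδ1' : 0 < δ1) (hlam : 0 < lam)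
    (φ' : ℝ → ℝ) (hφ' : StrictMono φ')
    (w z : ℕ → ℝ)
    (hw : ∀ n m, 1 ≤ n → n < m → m ≤ N → w m < w n)
    (hFOC1 : δ1 = lam / R * ∑ n ∈ Finset.Icc 1 N, p n * φ' (w n))
    (hFOCn : ∀ n, 2 ≤ n → n ≤ N →
      0 = (δ n - δ (n - 1)) *
            (δ1 * (∑ m ∈ Finset.Icc n N, q m) -
              lam / R * ∑ m ∈ Finset.Icc n N, p m * φ' (w m)) +
          lam * p n * δ n / R * φ' (w n) - lam * p n / R ^ 2 * φ' (z n)) :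
    ∀ n, 2 ≤ n → n ≤ N → δ n * R * φ' (w n) < φ' (z n) := by

  intro n hn2 hnN
  have hFOC := hFOCn n hn2 hnN
  have hn1 : 1 ≤ n - 1 := by omega
  have hn1N : n - 1 ≤ N := by omega
  -- split sums
  have hsplit : ∀ f : ℕ → ℝ,
      (∑ m ∈ Finset.Icc 1 (n - 1), f m) + ∑ m ∈ Finset.Icc n N, f m
        = ∑ m ∈ Finset.Icc 1 N, f m := by
    intro f
    have h1 : Finset.Icc 1 N = Finset.Ioc 0 N := by rw [← Finset.Icc_add_one_left_eq_Ioc]; rfl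
    have h2 : Finset.Icc n N = Finset.Ioc (n - 1) N := by
      rw [← Finset.Icc_add_one_left_eq_Ioc]; congr 1; omega
    have h3 : Finset.Icc 1 (n - 1) = Finset.Ioc 0 (n - 1) := by
      rw [← Finset.Icc_add_one_left_eq_Ioc]; rfl
    rw [h1, h2, h3]
    exact Finset.sum_Ioc_consecutive f (Nat.zero_le _) (by omega)
  set c := φ' (w (n - 1)) with hc
  set A := ∑ m ∈ Finset.Icc 1 (n - 1), p m * φ' (w m) with hA
  set B := ∑ m ∈ Finset.Icc n N, p m * φ' (w m) with hB
  set P := ∑ m ∈ Finset.Icc n N, p m with hP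
  set Pre := ∑ m ∈ Finset.Icc 1 (n - 1), p m with hPre
  set Qb := ∑ m ∈ Finset.Icc n N, q m with hQb
  set Qpre := ∑ m ∈ Finset.Icc 1 (n - 1), q m with hQpre
  have hPsum : Pre + P = 1 := by rw [hPre, hP, hsplit p, hp1]
  have hQsum : Qpre + Qb = 1 := by rw [hQpre, hQb, hsplit q, hq1]
  have hABsum : A + B = ∑ m ∈ Finset.Icc 1 N, p m * φ' (w m) :=
    hsplit (fun m => p m * φ' (w m))
  have hPpos : 0 < P := by
    refine Finset.sum_pos (fun i hi => ?_) ⟨n, Finset.mem_Icc.mpr ⟨le_refl n, hnN⟩⟩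
    rcases Finset.mem_Icc.mp hi with ⟨hi1, hi2⟩
    exact hp i (by omega) hi2
  have hPrepos : 0 < Pre := by
    refine Finset.sum_pos (fun i hi => ?_) ⟨n - 1, Finset.mem_Icc.mpr ⟨hn1, le_refl _⟩⟩
    rcases Finset.mem_Icc.mp hi with ⟨hi1, hi2⟩
    exact hp i hi1 (by omega)
  -- lower bound on A
  have hAc : Pre * c ≤ A := by
    rw [hPre, Finset.sum_mul, hA]
    refine Finset.sum_le_sum (fun i hi => ?_)
    rcases Finset.mem_Icc.mp hi with ⟨hi1, hi2⟩
    have hwi : c ≤ φ' (w i) := by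
      rcases eq_or_lt_of_le hi2 with h | h
      · rw [h]
      · exact (hφ' (hw i (n - 1) hi1 h hn1N)).le
    exact mul_le_mul_of_nonneg_left hwi (hp i hi1 (by omega)).le
  -- upper bound on B
  have hBc : B < P * c := by
    rw [hP, Finset.sum_mul, hB]
    refine Finset.sum_lt_sum_of_nonempty ⟨n, Finset.mem_Icc.mpr ⟨le_refl n, hnN⟩⟩
      (fun i hi => ?_)
    rcases Finset.mem_Icc.mp hi with ⟨hi1, hi2⟩
    have hwi : φ' (w i) < c := hφ' (hw (n - 1) i hn1 (by omega) hi2)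
    exact mul_lt_mul_of_pos_left hwi (hp i (by omega) hi2)
  have hlr : 0 < lam / R := div_pos hlam hR
  have hPQ : P ≤ Qb := by
    have := hFOSD (n - 1) hn1 hn1N
    rw [← hQpre, ← hPre] at this
    linarith
  -- the key positive term
  have hD : 0 < δ1 * Qb - lam / R * B := by
    have hδ1AB : δ1 = lam / R * (A + B) := by rw [hABsum]; exact hFOC1
    have h1 : P * A - Pre * B > 0 := by
      nlinarith [mul_le_mul_of_nonneg_left hAc hPpos.le,
        mul_lt_mul_of_pos_left hBc hPrepos]
    have h2 : δ1 * P ≤ δ1 * Qb := mul_le_mul_of_nonneg_left hPQ hδ1'.le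
    have h3 : δ1 * P - lam / R * B = lam / R * (P * A - Pre * B) := by
      rw [hδ1AB]; linear_combination lam / R * B * hPsum
    nlinarith
  have hδdiff : 0 < δ n - δ (n - 1) := by
    have := hδmono (n - 1) n hn1 (by omega) hnN
    linarith
  have hkey : 0 < (δ n - δ (n - 1)) * (δ1 * Qb - lam / R * B) := mul_pos hδdiff hD
  have hpn := hp n (by omega) hnN
  have hcoef : 0 < lam * p n / R ^ 2 := by positivity
  have hFOC' : lam * p n / R ^ 2 * φ' (z n)
      = (δ n - δ (n - 1)) * (δ1 * Qb - lam / R * B)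
        + lam * p n * δ n / R * φ' (w n) := by linarith [hFOC]
  have hlt : lam * p n / R ^ 2 * (δ n * R * φ' (w n)) < lam * p n / R ^ 2 * φ' (z n) := by
    have heq : lam * p n / R ^ 2 * (δ n * R * φ' (w n))
        = lam * p n * δ n / R * φ' (w n) := by
      field_simp
    rw [heq, hFOC']
    linarith
  exact lt_of_mul_lt_mul_left hlt hcoef.le
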